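/- Let p be a prime, m ∈ {1,…,p−1}, k ∈ ℤ_{≥0}, and let n be a positive integer with m·p^k ≤ n. Then ⌈log_p binom(n+p−1, p−1)⌉ > (p−1)·k + m − (p−1), where binom(n+p−1, p−1) is the binomial coefficient (equal to the number of S_n-orbits in 𝔽_p^n). -/
import Mathlib

lemma key_asc (p m k n : ℕ) (hp : 2 ≤ p) (hm1 : 1 ≤ m) (hmp : m ≤ p - 1)
    (hk : 1 ≤ k) (hn : m * p ^ k ≤ n) :
    ∀ j, 1 ≤ j → j ≤ p - 1 →
      p ^ (min j m * k + (j - min j m) * (k - 1)) * Nat.factorial j < (n + 1).ascFactorial j := by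
  intro j
  induction j with
  | zero => omega
  | succ j ih =>
    intro _ hj
    rcases Nat.eq_or_lt_of_le (Nat.one_le_iff_ne_zero.mpr (Nat.succ_ne_zero j)) with h1 | h1
    · -- j = 0
      have hj0 : j = 0 := by omega
      subst hj0
      show p ^ (min 1 m * k + (1 - min 1 m) * (k - 1)) * Nat.factorial 1 < (n + 1).ascFactorial 1
      have hmin : min 1 m = 1 := by omega
      have hasc1 : (n + 1).ascFactorial 1 = n + 1 := by
        rw [Nat.ascFactorial_succ, Nat.ascFactorial_zero, Nat.add_zero, Nat.mul_one]
      rw [hmin, hasc1]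
      have h2 : p ^ k ≤ n := le_trans (Nat.le_mul_of_pos_left _ hm1) hn
      simp only [Nat.sub_self, Nat.zero_mul, Nat.add_zero, Nat.factorial_one, Nat.mul_one,
        Nat.one_mul]
      omega
    · -- j ≥ 1
      have hj1 : 1 ≤ j := by omega
      have hjp : j ≤ p - 1 := by omega
      have IH := ih hj1 hjp
      have hppos : 0 < p := by omega
      -- the new factor bound: p ^ e * (j+1) ≤ n where e = k if j < m else k-1
      have hfac : (if j < m then p ^ k else p ^ (k-1)) * (j + 1) ≤ n := by
        split
        · -- j < m, so j+1 ≤ m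
          calc p ^ k * (j + 1) ≤ p ^ k * m := Nat.mul_le_mul_left _ (by omega)
            _ = m * p ^ k := Nat.mul_comm _ _
            _ ≤ n := hn
        · -- j+1 ≤ p-1 < p
          calc p ^ (k-1) * (j + 1) ≤ p ^ (k-1) * p := Nat.mul_le_mul_left _ (by omega)
            _ = p ^ k := by rw [← pow_succ]; congr 1; omega
            _ ≤ m * p ^ k := Nat.le_mul_of_pos_left _ hm1
            _ ≤ n := hn
      rw [Nat.ascFactorial_succ]
      by_cases hjm : j < m
      · have hminj : min j m = j := by omega
        have hminj1 : min (j+1) m = j + 1 := by omega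
        rw [hminj1, Nat.sub_self, Nat.zero_mul, Nat.add_zero]
        rw [hminj, Nat.sub_self, Nat.zero_mul, Nat.add_zero] at IH
        have : p ^ ((j+1) * k) = p ^ k * p ^ (j * k) := by
          rw [← pow_add]; congr 1; ring
        rw [this, Nat.factorial_succ]
        simp only [if_pos hjm] at hfac
        calc p ^ k * p ^ (j * k) * ((j+1) * Nat.factorial j)
            = (p ^ k * (j + 1)) * (p ^ (j * k) * Nat.factorial j) := by ring
          _ < (n + 1 + j) * (n + 1).ascFactorial j :=
              Nat.mul_lt_mul_of_le_of_lt (by omega) IH (by omega)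
      · have hminj : min j m = m := by omega
        have hminj1 : min (j+1) m = m := by omega
        rw [hminj] at IH
        rw [hminj1]
        have hsub : j + 1 - m = (j - m) + 1 := by omega
        rw [hsub]
        have : p ^ (m * k + ((j - m) + 1) * (k-1)) =
            p ^ (k-1) * p ^ (m * k + (j - m) * (k-1)) := by
          rw [← pow_add]; congr 1; ring
        rw [this, Nat.factorial_succ]
        simp only [if_neg hjm] at hfac
        calc p ^ (k-1) * p ^ (m * k + (j - m) * (k-1)) * ((j+1) * Nat.factorial j)
            = (p ^ (k-1) * (j + 1)) * (p ^ (m * k + (j - m) * (k-1)) * Nat.factorial j) := by ring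
          _ < (n + 1 + j) * (n + 1).ascFactorial j :=
              Nat.mul_lt_mul_of_le_of_lt (by omega) IH (by omega)

/-- For a prime `p`, `m ∈ {1, …, p-1}`, `k ≥ 0` and `n ≥ m·p^k`, one has
`⌈log_p (binom(n+p-1, p-1))⌉ > (p-1)·k + m - (p-1)`. -/
theorem stmt17 (p : ℕ) (hp : p.Prime) (m k n : ℕ)
    (hm1 : 1 ≤ m) (hmp : m ≤ p - 1) (hn : m * p ^ k ≤ n) :
    ((p : ℤ) - 1) * k + m - ((p : ℤ) - 1) <
      ⌈Real.logb p ((Nat.choose (n + p - 1) (p - 1) : ℝ))⌉ := by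
  have hp2 : 2 ≤ p := hp.two_le
  set C : ℕ := Nat.choose (n + p - 1) (p - 1) with hC
  have hn1 : 1 ≤ n := by
    have : 1 ≤ m * p ^ k := Nat.one_le_iff_ne_zero.mpr (by positivity)
    omega
  have hCp : p ≤ C := by
    have h1 : p.choose (p - 1) = p := by
      have : p - 1 ≤ p := by omega
      rw [← Nat.choose_symm this]
      have h2 : p - (p - 1) = 1 := by omega
      rw [h2, Nat.choose_one_right]
    calc p = p.choose (p-1) := h1.symm
      _ ≤ C := Nat.choose_le_choose _ (by omega)
  have hCpos : (0:ℝ) < C := by exact_mod_cast Nat.lt_of_lt_of_le (by omega) hCp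
  have hb : (1:ℝ) < p := by exact_mod_cast hp2
  rw [Int.lt_ceil]
  rcases Nat.eq_zero_or_pos k with hk0 | hk1
  · -- k = 0 : LHS ≤ 0 < 1 ≤ logb
    subst hk0
    have h1 : (1:ℝ) ≤ Real.logb p C := by
      rw [show (1:ℝ) = Real.logb p p from (Real.logb_self_eq_one hb).symm]
      exact Real.logb_le_logb_of_le hb (by positivity) (by exact_mod_cast hCp)
    have hm2 : (m : ℝ) ≤ (p : ℝ) - 1 := by
      have : (m : ℤ) ≤ (p : ℤ) - 1 := by omega
      exact_mod_cast this
    push_cast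
    linarith
  · -- k ≥ 1
    set t : ℕ := m * k + (p - 1 - m) * (k - 1) with ht
    have hmain : p ^ t * Nat.factorial (p-1) < (n + 1).ascFactorial (p - 1) := by
      have := key_asc p m k n hp2 hm1 hmp hk1 hn (p-1) (by omega) le_rfl
      have hmin : min (p-1) m = m := by omega
      rwa [hmin] at this
    have hasc : (n + 1).ascFactorial (p - 1) = Nat.factorial (p-1) * (n + (p-1)).choose (p-1) :=
      Nat.ascFactorial_eq_factorial_mul_choose n (p-1)
    have hnp : n + (p - 1) = n + p - 1 := by omega
    have hCt : p ^ t < C := by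
      rw [hasc, hnp, ← hC] at hmain
      rw [Nat.mul_comm] at hmain
      exact Nat.lt_of_mul_lt_mul_left hmain
    have hlog : (t : ℝ) < Real.logb p C := by
      rw [Real.lt_logb_iff_rpow_lt hb hCpos, Real.rpow_natCast]
      exact_mod_cast hCt
    have heq : (((p : ℤ) - 1) * k + m - ((p : ℤ) - 1) : ℤ) = (t : ℤ) := by
      rw [ht]
      have h1 : (((p:ℕ) - 1 - m : ℕ) : ℤ) = (p : ℤ) - 1 - m := by
        have := hmp; have := hp2; push_cast [Nat.cast_sub] <;> omega
      have h2 : (((k:ℕ) - 1 : ℕ) : ℤ) = (k : ℤ) - 1 := by omega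
      push_cast [h1, h2]
      ring
    rw [heq]
    exact_mod_cast hlog
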